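/- Let K ≥ 1, set 𝒦 = {−K,…,K} and m = 2K+1. Let {(x_i,v_i)}_{i=1}^m be m distinct particles in Ω and {(g_j,w_j)}_{j=1}^m be m pairwise distinct points of Ω. Suppose that for every k ∈ 𝒦 the positions x_i + kτv_i (i = 1,…,m) are pairwise distinct, and for every k ∈ 𝒦 and every i ∈ {1,…,m} there exists exactly one index j ∈ {1,…,m} with g_j − x_i + kτ(w_j − v_i) = 0. Then the signed measure h = Σ_{i=1}^m δ_{(x_i,v_i)} − Σ_{j=1}^m δ_{(g_j,w_j)} lies in the kernel of the measurement operator: (𝒢h)_{l,k} = 0 for every l ∈ ℤ^d with ‖l‖_∞ ≤ f_c and every k ∈ {−K,…,K}. -/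

import Mathlib

open MeasureTheory Complex Real Set

noncomputable section

/-- Phase space: positions and velocities in `ℝ^d`. -/
abbrev PS (d : ℕ) := (Fin d → ℝ) × (Fin d → ℝ)

/-- The phase-space domain `Ω`. -/
def Omega (d K : ℕ) (τ : ℝ) : Set (PS d) :=
  {p | ∀ k : ℤ, |k| ≤ (K : ℤ) → ∀ j, p.1 j + (k : ℝ) * τ * p.2 j ∈ Set.Icc (0 : ℝ) 1}

/-- The affine set `L_{i,k}` attached to a particle `p₀` and a time sample `k`. -/
def Lset (d K : ℕ) (τ : ℝ) (p₀ : PS d) (k : ℤ) : Set (PS d) :=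
  {p ∈ Omega d K τ | ∀ j, (p.1 j - p₀.1 j) + (k : ℝ) * τ * (p.2 j - p₀.2 j) = 0}

/-- `g` is a ghost particle of the configuration `P` with respect to the
set of time samples `Ks`. -/
def IsGhost {d K N : ℕ} (τ : ℝ) (P : Fin N → PS d) (Ks : Finset ℤ) (g : PS d) : Prop :=
  g ∈ Omega d K τ ∧ ∃ ι : ℤ → Fin N, Set.InjOn ι (Ks : Set ℤ) ∧
    (⋂ k ∈ Ks, Lset d K τ (P (ι k)) k) = {g}

/-- Integral of a complex function against a complex measure, via the Jordan
decompositions of the real and imaginary parts. -/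
def cintegral {α : Type*} [MeasurableSpace α] (μ : ComplexMeasure α) (f : α → ℂ) : ℂ :=
  ((∫ x, f x ∂(ComplexMeasure.re μ).toJordanDecomposition.posPart)
      - ∫ x, f x ∂(ComplexMeasure.re μ).toJordanDecomposition.negPart)
    + Complex.I * ((∫ x, f x ∂(ComplexMeasure.im μ).toJordanDecomposition.posPart)
      - ∫ x, f x ∂(ComplexMeasure.im μ).toJordanDecomposition.negPart)

/-- The total variation norm of a complex measure, defined by duality against
continuous functions bounded by one. -/
def tvNorm {α : Type*} [MeasurableSpace α] [TopologicalSpace α] (μ : ComplexMeasure α) : ℝ :=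
  sSup {r | ∃ f : α → ℂ, Continuous f ∧ (∀ x, ‖f x‖ ≤ 1) ∧ r = ‖cintegral μ f‖}

/-- A complex measure is supported on a set `S` if it vanishes on measurable sets
disjoint from `S`. -/
def SupportedOn {α : Type*} [MeasurableSpace α] (μ : ComplexMeasure α) (S : Set α) : Prop :=
  ∀ t : Set α, MeasurableSet t → Disjoint t S → μ t = 0

/-- The Dirac measure at a point, as a complex measure. -/
def cdirac {α : Type*} [MeasurableSpace α] (a : α) : ComplexMeasure α :=
  (MeasureTheory.Measure.dirac a).toSignedMeasure.toComplexMeasure 0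

/-- The test function `p ↦ e^{-2πi l·(x + kτv)}`. -/
def testFn (d : ℕ) (τ : ℝ) (l : Fin d → ℤ) (k : ℤ) : PS d → ℂ :=
  fun p => Complex.exp (-(2 * (π : ℂ) * Complex.I) *
    ∑ j, (l j : ℂ) * ((p.1 j : ℂ) + (k : ℂ) * (τ : ℂ) * (p.2 j : ℂ)))

/-- The measurement `(𝒢 μ)_{l,k}`. -/
def Gmeas {d : ℕ} (τ : ℝ) (μ : ComplexMeasure (PS d)) (l : Fin d → ℤ) (k : ℤ) : ℂ :=
  cintegral μ (testFn d τ l k)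

/-- Two complex measures give the same measurements for all allowed frequencies
`‖l‖_∞ ≤ f_c` and time samples `|k| ≤ K`. -/
def SameMeas {d : ℕ} (K : ℕ) (τ : ℝ) (f_c : ℕ) (μ ν : ComplexMeasure (PS d)) : Prop :=
  ∀ l : Fin d → ℤ, (∀ j, |l j| ≤ (f_c : ℤ)) → ∀ k : ℤ, |k| ≤ (K : ℤ) →
    Gmeas τ μ l k = Gmeas τ ν l k

/-- The set of allowed frequencies `l ∈ ℤ^d`, `‖l‖_∞ ≤ f_c`. -/
def freqSet (d : ℕ) (f_c : ℕ) : Finset (Fin d → ℤ) :=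
  Fintype.piFinset fun _ => Finset.Icc (-(f_c : ℤ)) (f_c : ℤ)

/-- A function on phase space has dynamical form. -/
def DynamicalForm (d K : ℕ) (τ : ℝ) (f_c : ℕ) (q : PS d → ℂ) : Prop :=
  ∃ c : ℤ → (Fin d → ℤ) → ℂ, ∀ p : PS d,
    q p = ∑ k ∈ Finset.Icc (-(K : ℤ)) (K : ℤ), ∑ l ∈ freqSet d f_c,
      c k l * Complex.exp ((2 * (π : ℂ) * Complex.I) *
        ∑ j, (l j : ℂ) * ((p.1 j : ℂ) + (k : ℂ) * (τ : ℂ) * (p.2 j : ℂ)))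

/-- The canonical embedding of `𝕂` (either `ℝ` or `ℂ`) into `ℂ`. -/
def toC {𝕜 : Type*} [RCLike 𝕜] (a : 𝕜) : ℂ :=
  (RCLike.re a : ℝ) + (RCLike.im a : ℝ) * Complex.I



/-! ### Auxiliary lemmas -/

lemma my_integrable_of_bound {α : Type*} [MeasurableSpace α] [TopologicalSpace α]
    [OpensMeasurableSpace α] (ν : MeasureTheory.Measure α) [IsFiniteMeasure ν]
    {f : α → ℂ} (hf : Continuous f) (hb : ∀ x, ‖f x‖ ≤ 1) : Integrable f ν :=
  (integrable_const (1:ℝ)).mono' hf.aestronglyMeasurable (Filter.Eventually.of_forall hb)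

lemma my_toSignedMeasure_finset_sum {α ι : Type*} [MeasurableSpace α] (s : Finset ι)
    (μ : ι → MeasureTheory.Measure α) [∀ i, IsFiniteMeasure (μ i)] :
    (∑ i ∈ s, μ i).toSignedMeasure = ∑ i ∈ s, (μ i).toSignedMeasure := by
  classical
  induction s using Finset.induction with
  | empty => simp [Measure.toSignedMeasure_zero]
  | @insert a s h ih =>
      calc (∑ i ∈ insert a s, μ i).toSignedMeasure
          = (μ a + ∑ i ∈ s, μ i).toSignedMeasure :=
            Measure.toSignedMeasure_congr (Finset.sum_insert h)
        _ = (μ a).toSignedMeasure + (∑ i ∈ s, μ i).toSignedMeasure :=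
            Measure.toSignedMeasure_add _ _
        _ = ∑ i ∈ insert a s, (μ i).toSignedMeasure := by rw [ih, Finset.sum_insert h]

lemma my_signed_int {α : Type*} [MeasurableSpace α] [TopologicalSpace α]
    [OpensMeasurableSpace α] (s : SignedMeasure α) (μ₁ μ₂ : MeasureTheory.Measure α)
    [IsFiniteMeasure μ₁] [IsFiniteMeasure μ₂]
    (hs : s = μ₁.toSignedMeasure - μ₂.toSignedMeasure)
    {f : α → ℂ} (hf : Continuous f) (hb : ∀ x, ‖f x‖ ≤ 1) :
    (∫ x, f x ∂s.toJordanDecomposition.posPart)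
      - ∫ x, f x ∂s.toJordanDecomposition.negPart
      = (∫ x, f x ∂μ₁) - ∫ x, f x ∂μ₂ := by
  have h2 := s.toSignedMeasure_toJordanDecomposition
  rw [JordanDecomposition.toSignedMeasure] at h2
  have key : s.toJordanDecomposition.posPart + μ₂ = s.toJordanDecomposition.negPart + μ₁ := by
    rw [← Measure.toSignedMeasure_eq_toSignedMeasure_iff, Measure.toSignedMeasure_add,
        Measure.toSignedMeasure_add]
    exact sub_eq_sub_iff_add_eq_add.mp (sub_eq_sub_iff_sub_eq_sub.mp (h2.trans hs))
  have i1 := my_integrable_of_bound s.toJordanDecomposition.posPart hf hb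
  have i2 := my_integrable_of_bound s.toJordanDecomposition.negPart hf hb
  have i3 := my_integrable_of_bound μ₁ hf hb
  have i4 := my_integrable_of_bound μ₂ hf hb
  have h5 := integral_add_measure i1 i4 (f := f)
  rw [key, integral_add_measure i2 i3] at h5
  linear_combination -h5

lemma my_cintegral_diff_dirac {d n m : ℕ} (P : Fin n → PS d) (G : Fin m → PS d)
    {f : PS d → ℂ} (hf : Continuous f) (hb : ∀ x, ‖f x‖ ≤ 1) :
    cintegral ((∑ i, cdirac (P i)) - (∑ j, cdirac (G j))) f
      = (∑ i, f (P i)) - ∑ j, f (G j) := by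
  have hre : ComplexMeasure.re ((∑ i, cdirac (P i)) - (∑ j, cdirac (G j)))
      = (∑ i, Measure.dirac (P i)).toSignedMeasure
        - (∑ j, Measure.dirac (G j)).toSignedMeasure := by
    rw [map_sub, map_sum, map_sum, my_toSignedMeasure_finset_sum,
      my_toSignedMeasure_finset_sum]
    rfl
  have him : ComplexMeasure.im ((∑ i, cdirac (P i)) - (∑ j, cdirac (G j))) = 0 := by
    rw [map_sub, map_sum, map_sum]
    have h0 : ∀ a : PS d, ComplexMeasure.im (cdirac a) = 0 := fun a => rfl
    simp [h0]
  rw [cintegral, hre, him, SignedMeasure.toJordanDecomposition_zero,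
    JordanDecomposition.zero_posPart, JordanDecomposition.zero_negPart,
    my_signed_int _ _ _ rfl hf hb,
    integral_finset_sum_measure (fun i _ => my_integrable_of_bound _ hf hb),
    integral_finset_sum_measure (fun i _ => my_integrable_of_bound _ hf hb)]
  simp [integral_dirac _ _]

lemma my_testFn_continuous (d : ℕ) (τ : ℝ) (l : Fin d → ℤ) (k : ℤ) :
    Continuous (testFn d τ l k) := by
  apply Complex.continuous_exp.comp
  apply continuous_const.mul
  apply continuous_finset_sum
  intro j _
  exact continuous_const.mul
    ((Complex.continuous_ofReal.comp ((continuous_apply j).comp continuous_fst)).add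
      (continuous_const.mul
        (Complex.continuous_ofReal.comp ((continuous_apply j).comp continuous_snd))))

lemma my_testFn_sum_real (d : ℕ) (τ : ℝ) (l : Fin d → ℤ) (k : ℤ) (p : PS d) :
    (∑ j, (l j : ℂ) * ((p.1 j : ℂ) + (k : ℂ) * (τ : ℂ) * (p.2 j : ℂ)))
      = (((∑ j, (l j : ℝ) * (p.1 j + (k : ℝ) * τ * p.2 j)) : ℝ) : ℂ) := by
  push_cast
  ring

lemma my_testFn_norm (d : ℕ) (τ : ℝ) (l : Fin d → ℤ) (k : ℤ) (p : PS d) :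
    ‖testFn d τ l k p‖ ≤ 1 := by
  rw [testFn, my_testFn_sum_real]
  set r : ℝ := ∑ j, (l j : ℝ) * (p.1 j + (k : ℝ) * τ * p.2 j)
  have : -(2 * (π : ℂ) * Complex.I) * (r : ℂ) = ((-(2 * π * r) : ℝ) : ℂ) * Complex.I := by
    push_cast; ring
  rw [this]
  rw [Complex.norm_exp_ofReal_mul_I]

/-- The signed measure `h = ∑ δ_{(x_i,v_i)} − ∑ δ_{(g_j,w_j)}` associated
with a configuration and matched ghost points lies in the kernel of the measurement
operator `𝒢`. -/
theorem ghost_difference_in_kernel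
    {d K : ℕ} (hd : 1 ≤ d) (hK : 1 ≤ K) (τ : ℝ) (hτ : 0 < τ) (f_c : ℕ)
    (P G : Fin (2 * K + 1) → PS d)
    (hPmem : ∀ i, P i ∈ Omega d K τ) (hPdist : Function.Injective P)
    (hGmem : ∀ j, G j ∈ Omega d K τ) (hGdist : Function.Injective G)
    (hpos : ∀ k ∈ Finset.Icc (-(K : ℤ)) (K : ℤ), ∀ i i' : Fin (2 * K + 1), i ≠ i' →
      (fun j => (P i).1 j + (k : ℝ) * τ * (P i).2 j) ≠
        (fun j => (P i').1 j + (k : ℝ) * τ * (P i').2 j))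
    (huniq : ∀ k ∈ Finset.Icc (-(K : ℤ)) (K : ℤ), ∀ i : Fin (2 * K + 1),
      ∃! j' : Fin (2 * K + 1), ∀ j,
        (G j').1 j - (P i).1 j + (k : ℝ) * τ * ((G j').2 j - (P i).2 j) = 0) :
    ∀ l : Fin d → ℤ, (∀ j, |l j| ≤ (f_c : ℤ)) → ∀ k : ℤ, |k| ≤ (K : ℤ) →
      Gmeas τ ((∑ i, cdirac (P i)) - (∑ j, cdirac (G j))) l k = 0 := by
  intro l hl k hk
  have hkI : k ∈ Finset.Icc (-(K : ℤ)) (K : ℤ) := by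
    rw [Finset.mem_Icc]
    exact abs_le.mp hk
  set f := testFn d τ l k with hfdef
  have hf : Continuous f := my_testFn_continuous d τ l k
  have hb : ∀ x, ‖f x‖ ≤ 1 := my_testFn_norm d τ l k
  choose σ hσ _ using fun i => huniq k hkI i
  have hfeq : ∀ i, f (G (σ i)) = f (P i) := by
    intro i
    have hx : ∀ j, (G (σ i)).1 j + (k : ℝ) * τ * (G (σ i)).2 j
        = (P i).1 j + (k : ℝ) * τ * (P i).2 j := by
      intro j; have := hσ i j; linarith
    simp only [hfdef, testFn]
    congr 1
    congr 1
    apply Finset.sum_congr rfl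
    intro j _
    have h1 := congrArg (fun r : ℝ => (r : ℂ)) (hx j)
    push_cast at h1
    rw [show ((G (σ i)).1 j : ℂ) + (k : ℂ) * (τ : ℂ) * ((G (σ i)).2 j : ℂ)
        = ((P i).1 j : ℂ) + (k : ℂ) * (τ : ℂ) * ((P i).2 j : ℂ) by linear_combination h1]
  have hinj : Function.Injective σ := by
    intro i i' he
    by_contra hne
    apply hpos k hkI i i' hne
    funext j
    have h1 := hσ i j
    have h2 := hσ i' j
    rw [he] at h1
    linarith
  have hbij : Function.Bijective σ := Finite.injective_iff_bijective.mp hinj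
  have hsum : (∑ i, f (P i)) = ∑ j, f (G j) :=
    Fintype.sum_bijective σ hbij _ _ (fun i => (hfeq i).symm)
  rw [Gmeas, my_cintegral_diff_dirac P G hf hb, hsum, sub_self]


end
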